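/- Let H ∈ ℝ^{n×n} be symmetric with smallest eigenvalue α₀ > −∞, ν > 0, σ > 0. Then there exist γ ≥ 0, δ ∈ [0, ν), and for each x the symmetric positive definite matrix P = [[2I, νI], [νI, 2H + 2aI]] (with a ≥ 0 such that a + α₀ > ν²/4) satisfying Q P + P Q^T + γD ≥ (ν − δ) P, where Q = [[0, I], [-H, νI]] and D = [[0,0],[0, σI]]. -/

import Mathlib

open Matrix

lemma dot_self_nonneg' {n : ℕ} (u : Fin n → ℝ) : 0 ≤ u ⬝ᵥ u :=
  Finset.sum_nonneg fun i _ => mul_self_nonneg _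

lemma dot_self_pos' {n : ℕ} {u : Fin n → ℝ} (hu : u ≠ 0) : 0 < u ⬝ᵥ u := by
  obtain ⟨i, hi⟩ := Function.ne_iff.mp hu
  exact Finset.sum_pos' (fun j _ => mul_self_nonneg _)
    ⟨i, Finset.mem_univ i, mul_self_pos.mpr hi⟩

lemma sub_smul_one_posSemidef {n : ℕ} (α₀ : ℝ) (H : Matrix (Fin n) (Fin n) ℝ)
    (hH : H.IsHermitian) (hlb : ∀ i, α₀ ≤ hH.eigenvalues i) : (H - α₀ • 1).PosSemidef := by
  have hU := hH.spectral_theorem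
  set U := (hH.eigenvectorUnitary : Matrix (Fin n) (Fin n) ℝ) with hUdef
  have hUU : U * star U = 1 := (Matrix.mem_unitaryGroup_iff).mp hH.eigenvectorUnitary.2
  have key : U * diagonal (fun i => hH.eigenvalues i - α₀) * star U = H - α₀ • 1 := by
    have hd : diagonal (fun i => hH.eigenvalues i - α₀)
        = diagonal (RCLike.ofReal ∘ hH.eigenvalues) - α₀ • 1 := by
      ext i j
      by_cases h : i = j <;> simp [h, diagonal]
    rw [Unitary.conjStarAlgAut_apply] at hU
    rw [hd, Matrix.mul_sub, Matrix.sub_mul, ← hU]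
    congr 1
    rw [Matrix.mul_smul, Matrix.smul_mul, Matrix.mul_one, hUU]
  rw [← key]
  have : (diagonal (fun i => hH.eigenvalues i - α₀)).PosSemidef :=
    posSemidef_diagonal_iff.mpr fun i => by linarith [hlb i]
  simpa [Matrix.star_eq_conjTranspose] using this.mul_mul_conjTranspose_same U

lemma quad_form_blocks {n : ℕ} (p q q' s r : ℝ) (H : Matrix (Fin n) (Fin n) ℝ)
    (u v : Fin n → ℝ) :
    Sum.elim u v ⬝ᵥ (fromBlocks (p • (1 : Matrix (Fin n) (Fin n) ℝ)) (q • 1) (q' • 1)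
      (s • H + r • 1)) *ᵥ Sum.elim u v =
    p * (u ⬝ᵥ u) + q * (u ⬝ᵥ v) + q' * (v ⬝ᵥ u) + s * (v ⬝ᵥ H *ᵥ v) + r * (v ⬝ᵥ v) := by
  rw [fromBlocks_mulVec, sumElim_dotProduct_sumElim]
  simp [add_mulVec, smul_mulVec, dotProduct_add, dotProduct_smul, smul_eq_mul]
  ring

lemma key_blocks {n : ℕ} (ν σ a γ δ : ℝ) (H : Matrix (Fin n) (Fin n) ℝ) (hHt : Hᵀ = H) :
    (fromBlocks (0 : Matrix (Fin n) (Fin n) ℝ) 1 (-H) (ν • 1)) *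
      (fromBlocks ((2 : ℝ) • (1 : Matrix (Fin n) (Fin n) ℝ)) (ν • 1) (ν • 1)
        ((2 : ℝ) • H + (2 * a) • 1)) +
    (fromBlocks ((2 : ℝ) • (1 : Matrix (Fin n) (Fin n) ℝ)) (ν • 1) (ν • 1)
        ((2 : ℝ) • H + (2 * a) • 1)) *
      (fromBlocks (0 : Matrix (Fin n) (Fin n) ℝ) 1 (-H) (ν • 1))ᵀ +
    γ • (fromBlocks (0 : Matrix (Fin n) (Fin n) ℝ) 0 0 (σ • 1)) -
    (ν - δ) • (fromBlocks ((2 : ℝ) • (1 : Matrix (Fin n) (Fin n) ℝ)) (ν • 1) (ν • 1)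
        ((2 : ℝ) • H + (2 * a) • 1)) =
    fromBlocks ((2 * δ) • (1 : Matrix (Fin n) (Fin n) ℝ)) ((2 * a + ν * δ) • 1)
      ((2 * a + ν * δ) • 1) ((2 * δ) • H + (2 * a * ν + 2 * a * δ + γ * σ) • 1) := by
  rw [fromBlocks_transpose]
  simp only [fromBlocks_multiply, fromBlocks_smul, fromBlocks_add, sub_eq_add_neg,
    fromBlocks_neg, transpose_smul, transpose_one, hHt, transpose_neg]
  ext i j
  rcases i with i | i <;> rcases j with j | j <;>
    simp [fromBlocks, Matrix.one_apply, Matrix.smul_apply, Matrix.add_apply, Matrix.neg_apply] <;>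
    by_cases h : i = j <;> simp [h] <;> ring

lemma herm_blocks {n : ℕ} (p q s r : ℝ) (H : Matrix (Fin n) (Fin n) ℝ) (hHt : Hᵀ = H) :
    (fromBlocks (p • (1 : Matrix (Fin n) (Fin n) ℝ)) (q • 1) (q • 1)
      (s • H + r • 1)).IsHermitian := by
  unfold Matrix.IsHermitian
  rw [fromBlocks_conjTranspose]
  simp [hHt]

/-- For `H` real symmetric with all eigenvalues `≥ α₀`, `ν, σ > 0`, there exist `γ ≥ 0`,
`δ ∈ [0, ν)` and `a ≥ 0` with `a + α₀ > ν²/4` such that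
`P = [[2I, νI], [νI, 2H + 2aI]]` is positive definite and
`QP + PQᵀ + γD ≥ (ν - δ)P`, where `Q = [[0, I], [-H, νI]]` and `D = diag(0, σI)`. -/
theorem stmt6 (n : ℕ) (ν σ α₀ : ℝ) (hν : 0 < ν) (hσ : 0 < σ)
    (H : Matrix (Fin n) (Fin n) ℝ) (hH : H.IsHermitian)
    (hlb : ∀ i, α₀ ≤ hH.eigenvalues i) :
    ∃ γ δ a : ℝ, 0 ≤ γ ∧ 0 ≤ δ ∧ δ < ν ∧ 0 ≤ a ∧ ν ^ 2 / 4 < a + α₀ ∧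
      (let P := Matrix.fromBlocks ((2 : ℝ) • (1 : Matrix (Fin n) (Fin n) ℝ)) (ν • 1) (ν • 1)
          ((2 : ℝ) • H + (2 * a) • 1);
       let Q := Matrix.fromBlocks (0 : Matrix (Fin n) (Fin n) ℝ) 1 (-H) (ν • 1);
       let D := Matrix.fromBlocks (0 : Matrix (Fin n) (Fin n) ℝ) 0 0 (σ • 1);
       P.PosDef ∧ (Q * P + P * Qᵀ + γ • D - (ν - δ) • P).PosSemidef) := by
  have hHt : Hᵀ = H := by simpa using hH.eq
  set a : ℝ := max 0 (ν ^ 2 / 4 - α₀ + 1) with ha_def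
  set δ : ℝ := ν / 2 with hδ_def
  have hδpos : 0 < δ := by positivity
  set b : ℝ := 2 * a + ν * δ with hb_def
  set γ : ℝ := max 0 ((b ^ 2 / (2 * δ) - 2 * δ * α₀ - 2 * a * ν - 2 * a * δ) / σ) with hγ_def
  have ha : 0 ≤ a := le_max_left _ _
  have haα : ν ^ 2 / 4 < a + α₀ := by
    rcases le_total (ν ^ 2 / 4 - α₀ + 1) 0 with h | h
    · rw [ha_def, max_eq_left h]; linarith
    · have : ν ^ 2 / 4 - α₀ + 1 ≤ a := le_max_right _ _
      linarith
  have hγ0 : 0 ≤ γ := le_max_left _ _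
  have hγσ : b ^ 2 / (2 * δ) - 2 * δ * α₀ - 2 * a * ν - 2 * a * δ ≤ γ * σ := by
    have h1 : (b ^ 2 / (2 * δ) - 2 * δ * α₀ - 2 * a * ν - 2 * a * δ) / σ ≤ γ := le_max_right _ _
    have h2 := mul_le_mul_of_nonneg_right h1 hσ.le
    rwa [div_mul_cancel₀ _ hσ.ne'] at h2
  have hK := sub_smul_one_posSemidef α₀ H hH hlb
  have hHq : ∀ v : Fin n → ℝ, α₀ * (v ⬝ᵥ v) ≤ v ⬝ᵥ H *ᵥ v := by
    intro v
    have := hK.dotProduct_mulVec_nonneg v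
    simp only [star_trivial, sub_mulVec, smul_mulVec, one_mulVec, dotProduct_sub,
      dotProduct_smul, smul_eq_mul] at this
    linarith
  refine ⟨γ, δ, a, hγ0, hδpos.le, by rw [hδ_def]; linarith, ha, haα, ?_, ?_⟩
  · -- P positive definite
    refine PosDef.of_dotProduct_mulVec_pos (by simpa using herm_blocks 2 ν 2 (2 * a) H hHt) ?_
    intro x hx
    set u : Fin n → ℝ := x ∘ Sum.inl with hu
    set v : Fin n → ℝ := x ∘ Sum.inr with hv
    have hxe : x = Sum.elim u v := by
      funext i; cases i <;> rfl
    have hform := quad_form_blocks 2 ν ν 2 (2 * a) H u v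
    rw [hxe]
    simp only [star_trivial]
    rw [hform]
    have hS : 0 ≤ (u + (ν / 2) • v) ⬝ᵥ (u + (ν / 2) • v) := dot_self_nonneg' _
    have hSexp : (u + (ν / 2) • v) ⬝ᵥ (u + (ν / 2) • v)
        = u ⬝ᵥ u + ν * (u ⬝ᵥ v) + (ν ^ 2 / 4) * (v ⬝ᵥ v) := by
      simp [dotProduct_add, add_dotProduct, dotProduct_smul, smul_dotProduct, smul_eq_mul,
        dotProduct_comm v u]
      ring
    have hWc : v ⬝ᵥ u = u ⬝ᵥ v := dotProduct_comm v u
    have hq := hHq v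
    have hV : 0 ≤ v ⬝ᵥ v := dot_self_nonneg' v
    by_cases hvz : v = 0
    · have huz : u ≠ 0 := by
        intro h0
        apply hx
        rw [hxe, h0, hvz]
        funext i; cases i <;> rfl
      have hU : 0 < u ⬝ᵥ u := dot_self_pos' huz
      rw [hvz]
      simp
      linarith
    · have hVpos : 0 < v ⬝ᵥ v := dot_self_pos' hvz
      rw [hWc]
      nlinarith [hS, hSexp, hq, hVpos, haα]
  · -- the PSD inequality
    rw [key_blocks ν σ a γ δ H hHt]
    refine PosSemidef.of_dotProduct_mulVec_nonneg (herm_blocks (2 * δ) (2 * a + ν * δ) (2 * δ) (2 * a * ν + 2 * a * δ + γ * σ) H hHt) ?_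
    intro x
    set u : Fin n → ℝ := x ∘ Sum.inl with hu
    set v : Fin n → ℝ := x ∘ Sum.inr with hv
    have hxe : x = Sum.elim u v := by
      funext i; cases i <;> rfl
    rw [hxe]
    simp only [star_trivial]
    rw [quad_form_blocks (2 * δ) (2 * a + ν * δ) (2 * a + ν * δ) (2 * δ)
      (2 * a * ν + 2 * a * δ + γ * σ) H u v]
    have hWc : v ⬝ᵥ u = u ⬝ᵥ v := dotProduct_comm v u
    have hq := hHq v
    have hV : 0 ≤ v ⬝ᵥ v := dot_self_nonneg' v
    have hS : 0 ≤ ((2 * δ) • u + b • v) ⬝ᵥ ((2 * δ) • u + b • v) := dot_self_nonneg' _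
    have hSexp : ((2 * δ) • u + b • v) ⬝ᵥ ((2 * δ) • u + b • v)
        = (2 * δ) ^ 2 * (u ⬝ᵥ u) + 2 * (2 * δ) * b * (u ⬝ᵥ v) + b ^ 2 * (v ⬝ᵥ v) := by
      simp [dotProduct_add, add_dotProduct, dotProduct_smul, smul_dotProduct, smul_eq_mul,
        dotProduct_comm v u]
      ring
    rw [hWc, ← hb_def]
    have h2δ : 0 < 2 * δ := by linarith
    have hb2 : b ^ 2 ≤ 2 * δ * (2 * δ * α₀ + 2 * a * ν + 2 * a * δ + γ * σ) := by
      have h3 := mul_le_mul_of_nonneg_right hγσ h2δ.le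
      have h4 : b ^ 2 / (2 * δ) * (2 * δ) = b ^ 2 := div_mul_cancel₀ _ h2δ.ne'
      rw [sub_mul, sub_mul, sub_mul, h4] at h3
      linarith
    rw [hSexp] at hS
    set U' : ℝ := u ⬝ᵥ u with hU'_def
    set W' : ℝ := u ⬝ᵥ v with hW'_def
    set V' : ℝ := v ⬝ᵥ v with hV'_def
    set Hq' : ℝ := v ⬝ᵥ H *ᵥ v with hHq'_def
    have h5 : 0 ≤ (2 * δ * (2 * δ * α₀ + 2 * a * ν + 2 * a * δ + γ * σ) - b ^ 2) * V' :=
      mul_nonneg (by linarith) hV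
    have h6 := mul_le_mul_of_nonneg_left hq (by positivity : (0:ℝ) ≤ 4 * δ ^ 2)
    clear_value U' W' V' Hq'
    clear_value a δ b γ
    have key : 0 ≤ 2 * δ * (2 * δ * U' + b * W' + b * W' + 2 * δ * Hq'
        + (2 * a * ν + 2 * a * δ + γ * σ) * V') := by linarith [hS, h5, h6]
    nlinarith [key, h2δ]
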